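/- arXiv:1706.07640 — 4 statements merged into one kernel-verified Lean document; each statement's English description precedes it below -/
import Mathlib

section
/- Assume that every diagonal entry of B is nonzero and that every row of B̃ is nonzero. Let D be the diagonal part of B and R = B − D. Given x₁ ∈ ℝ^m and x₂ ∈ ℝ^p, define one generalized Jacobi iteration by: d ∈ ℝ^m with d_i = (b_i − B_i·x₁ − B̃_i·x₂)/(m·‖B̃_i‖₁); x₂' = x₂ + s(B̃)·d; b̂ = b − B̃·x₂'; and x₁' = D⁻¹·(−R·x₁ + b̂). Then x₁' = x₁ − D⁻¹·(I − (1/m)·B̃·s(B̃)·N(B̃)⁻¹)·(B·x₁ + B̃·x₂ − b), where I is the m×m identity matrix. -/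
/-- one generalized Jacobi iteration satisfies
`x₁' = x₁ − D⁻¹ (I − (1/m) B̃ s(B̃) N(B̃)⁻¹) (B x₁ + B̃ x₂ − b)`. -/
theorem generalized_jacobi_step_formula
    (m p : ℕ) (hm : 0 < m) (hp : 0 < p)
    (B : Matrix (Fin m) (Fin m) ℝ) (Bt : Matrix (Fin m) (Fin p) ℝ) (b : Fin m → ℝ)
    (hDiag : ∀ i, B i i ≠ 0) (hRows : ∀ i, Bt i ≠ 0)
    (s : Matrix (Fin p) (Fin m) ℝ) (hs : ∀ j i, s j i = Real.sign (Bt i j))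
    (N : Matrix (Fin m) (Fin m) ℝ)
    (hN : N = Matrix.diagonal (fun i => ∑ j, |Bt i j|))
    (D : Matrix (Fin m) (Fin m) ℝ) (hD : D = Matrix.diagonal (fun i => B i i))
    (R : Matrix (Fin m) (Fin m) ℝ) (hR : R = B - D)
    (x₁ : Fin m → ℝ) (x₂ : Fin p → ℝ)
    (d : Fin m → ℝ)
    (hd : ∀ i, d i = (b i - (B.mulVec x₁) i - (Bt.mulVec x₂) i) /
      ((m : ℝ) * ∑ j, |Bt i j|))
    (x₂' : Fin p → ℝ) (hx₂' : x₂' = x₂ + s.mulVec d)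
    (bhat : Fin m → ℝ) (hbhat : bhat = b - Bt.mulVec x₂')
    (x₁' : Fin m → ℝ) (hx₁' : x₁' = D⁻¹.mulVec (-(R.mulVec x₁) + bhat)) :
    x₁' = x₁ - (D⁻¹ * (1 - (1 / (m : ℝ)) • (Bt * s * N⁻¹))).mulVec
      (B.mulVec x₁ + Bt.mulVec x₂ - b) := by
  have hm' : (m:ℝ) ≠ 0 := Nat.cast_ne_zero.mpr hm.ne'
  have hS : ∀ i, (∑ j, |Bt i j|) ≠ 0 := by
    intro i
    have hpos : 0 < ∑ j, |Bt i j| := by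
      obtain ⟨j, hj⟩ := Function.ne_iff.mp (hRows i)
      exact Finset.sum_pos' (fun j _ => abs_nonneg _) ⟨j, Finset.mem_univ j, abs_pos.mpr hj⟩
    exact hpos.ne'
  have hNinv : N⁻¹ = Matrix.diagonal (fun i => (∑ j, |Bt i j|)⁻¹) := by
    apply Matrix.inv_eq_right_inv
    rw [hN, Matrix.diagonal_mul_diagonal]
    convert Matrix.diagonal_one with i
    exact mul_inv_cancel₀ (hS i)
  set r : Fin m → ℝ := B.mulVec x₁ + Bt.mulVec x₂ - b with hr
  have hdv : d = (-(1/(m:ℝ))) • N⁻¹.mulVec r := by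
    funext i
    rw [hd i, hNinv]
    simp only [Pi.smul_apply, Matrix.mulVec_diagonal, hr, Pi.sub_apply, Pi.add_apply,
      smul_eq_mul]
    field_simp
    ring
  have key : -(R.mulVec x₁) + bhat
      = D.mulVec x₁ - (1 - (1/(m:ℝ)) • (Bt * s * N⁻¹)).mulVec r := by
    rw [hbhat, hx₂', hR, hdv]
    funext i
    simp only [Matrix.mulVec_add, Matrix.mulVec_smul, Matrix.sub_mulVec, Matrix.one_mulVec,
      Matrix.smul_mulVec, Matrix.mulVec_mulVec, Pi.add_apply, Pi.sub_apply, Pi.neg_apply,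
      Pi.smul_apply, smul_eq_mul, hr, Matrix.mul_assoc]
    ring
  rw [hx₁', key, Matrix.mulVec_sub, Matrix.mulVec_mulVec, Matrix.mulVec_mulVec]
  congr 1
  have hDD : D⁻¹ * D = 1 := by
    apply Matrix.nonsing_inv_mul
    rw [hD, Matrix.det_diagonal]
    exact isUnit_iff_ne_zero.mpr (Finset.prod_ne_zero_iff.mpr fun i _ => hDiag i)
  rw [hDD, Matrix.one_mulVec]
end

section
/- Assume that every diagonal entry of B is nonzero and that every row of B̃ is nonzero. Let D be the diagonal part of B and R = B − D. Given x₁ ∈ ℝ^m and x₂ ∈ ℝ^p, define one generalized Jacobi iteration by: d ∈ ℝ^m with d_i = (b_i − B_i·x₁ − B̃_i·x₂)/(m·‖B̃_i‖₁); x₂' = x₂ + s(B̃)·d; b̂ = b − B̃·x₂'; and x₁' = D⁻¹·(−R·x₁ + b̂). Then the new residual satisfies (B·x₁' + B̃·x₂' − b) = (I − B·D⁻¹)·(I − (1/m)·B̃·s(B̃)·N(B̃)⁻¹)·(B·x₁ + B̃·x₂ − b), where I is the m×m identity matrix. -/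
/-- one generalized Jacobi iteration maps the residual by
`(B x₁' + B̃ x₂' − b) = (I − B D⁻¹)(I − (1/m) B̃ s(B̃) N(B̃)⁻¹)(B x₁ + B̃ x₂ − b)`. -/
theorem generalized_jacobi_residual_formula
    (m p : ℕ) (hm : 0 < m) (hp : 0 < p)
    (B : Matrix (Fin m) (Fin m) ℝ) (Bt : Matrix (Fin m) (Fin p) ℝ) (b : Fin m → ℝ)
    (hDiag : ∀ i, B i i ≠ 0) (hRows : ∀ i, Bt i ≠ 0)
    (s : Matrix (Fin p) (Fin m) ℝ) (hs : ∀ j i, s j i = Real.sign (Bt i j))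
    (N : Matrix (Fin m) (Fin m) ℝ)
    (hN : N = Matrix.diagonal (fun i => ∑ j, |Bt i j|))
    (D : Matrix (Fin m) (Fin m) ℝ) (hD : D = Matrix.diagonal (fun i => B i i))
    (R : Matrix (Fin m) (Fin m) ℝ) (hR : R = B - D)
    (x₁ : Fin m → ℝ) (x₂ : Fin p → ℝ)
    (d : Fin m → ℝ)
    (hd : ∀ i, d i = (b i - (B.mulVec x₁) i - (Bt.mulVec x₂) i) /
      ((m : ℝ) * ∑ j, |Bt i j|))
    (x₂' : Fin p → ℝ) (hx₂' : x₂' = x₂ + s.mulVec d)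
    (bhat : Fin m → ℝ) (hbhat : bhat = b - Bt.mulVec x₂')
    (x₁' : Fin m → ℝ) (hx₁' : x₁' = D⁻¹.mulVec (-(R.mulVec x₁) + bhat)) :
    B.mulVec x₁' + Bt.mulVec x₂' - b =
      ((1 - B * D⁻¹) * (1 - (1 / (m : ℝ)) • (Bt * s * N⁻¹))).mulVec
        (B.mulVec x₁ + Bt.mulVec x₂ - b) := by
  -- notation
  set r : Fin m → ℝ := B.mulVec x₁ + Bt.mulVec x₂ - b with hr
  have hfN : ∀ i, (0:ℝ) < ∑ j, |Bt i j| := by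
    intro i
    obtain ⟨j, hj⟩ : ∃ j, Bt i j ≠ 0 := by
      by_contra h
      push_neg at h
      exact hRows i (funext h)
    have : (0:ℝ) < |Bt i j| := abs_pos.mpr hj
    exact lt_of_lt_of_le this (Finset.single_le_sum (f := fun k => |Bt i k|)
      (fun k _ => abs_nonneg _) (Finset.mem_univ j))
  -- inverses of diagonal matrices
  have hDinv : D⁻¹ = Matrix.diagonal (fun i => (B i i)⁻¹) := by
    apply Matrix.inv_eq_right_inv
    rw [hD, Matrix.diagonal_mul_diagonal]
    convert Matrix.diagonal_one with i
    exact mul_inv_cancel₀ (hDiag i)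
  have hNinv : N⁻¹ = Matrix.diagonal (fun i => (∑ j, |Bt i j|)⁻¹) := by
    apply Matrix.inv_eq_right_inv
    rw [hN, Matrix.diagonal_mul_diagonal]
    convert Matrix.diagonal_one with i
    exact mul_inv_cancel₀ (ne_of_gt (hfN i))
  -- express d
  have hdv : d = -((1 / (m : ℝ)) • (N⁻¹.mulVec r)) := by
    funext i
    rw [hd i, hNinv]
    simp only [Pi.neg_apply, Pi.smul_apply, Matrix.mulVec_diagonal, smul_eq_mul, hr,
      Pi.add_apply, Pi.sub_apply]
    have h1 : (m:ℝ) ≠ 0 := Nat.cast_ne_zero.mpr hm.ne'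
    have h2 := (hfN i).ne'
    field_simp
    ring
  -- first half: the x₂ update
  have hBt2 : Bt.mulVec x₂' = Bt.mulVec x₂ + (Bt * s).mulVec d := by
    rw [hx₂', Matrix.mulVec_add, ← Matrix.mulVec_mulVec]
  have hr' : B.mulVec x₁ + Bt.mulVec x₂' - b
      = (1 - (1 / (m : ℝ)) • (Bt * s * N⁻¹)).mulVec r := by
    rw [hBt2, hdv, Matrix.mulVec_neg, Matrix.mulVec_smul, Matrix.mulVec_mulVec,
      Matrix.sub_mulVec, Matrix.one_mulVec, Matrix.smul_mulVec]
    funext i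
    simp [hr]
    ring
  set r' : Fin m → ℝ := B.mulVec x₁ + Bt.mulVec x₂' - b with hrr
  -- second half: the x₁ update
  have hDD : D⁻¹ * D = 1 := by
    rw [hDinv, hD, Matrix.diagonal_mul_diagonal]
    convert Matrix.diagonal_one with i
    exact inv_mul_cancel₀ (hDiag i)
  have hx1 : x₁' = x₁ - D⁻¹.mulVec r' := by
    have harg : -(R.mulVec x₁) + bhat = D.mulVec x₁ - r' := by
      rw [hR, hbhat, Matrix.sub_mulVec, hrr]
      funext i
      simp
      ring
    rw [hx₁', harg, Matrix.mulVec_sub, Matrix.mulVec_mulVec, hDD, Matrix.one_mulVec]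
  have hfin : B.mulVec x₁' + Bt.mulVec x₂' - b = (1 - B * D⁻¹).mulVec r' := by
    rw [hx1, Matrix.mulVec_sub, Matrix.mulVec_mulVec, Matrix.sub_mulVec,
      Matrix.one_mulVec, hrr]
    funext i
    simp
    ring
  rw [hfin, hr', Matrix.mulVec_mulVec]
end

section
/- Assume that every diagonal entry of B is nonzero and that every row of B̃ is nonzero. Let L be the lower-triangular part of B (L_{ij} = B_{ij} if j ≤ i and L_{ij} = 0 otherwise) and R = B − L. Given x₁ ∈ ℝ^m and x₂ ∈ ℝ^p, define one generalized Gauss–Seidel iteration by: d ∈ ℝ^m with d_i = (b_i − B_i·x₁ − B̃_i·x₂)/(m·‖B̃_i‖₁); x₂' = x₂ + s(B̃)·d; b̂ = b − B̃·x₂'; and x₁' = L⁻¹·(−R·x₁ + b̂). Then the new residual satisfies (B·x₁' + B̃·x₂' − b) = (I − B·L⁻¹)·(I − (1/m)·B̃·s(B̃)·N(B̃)⁻¹)·(B·x₁ + B̃·x₂ − b), where I is the m×m identity matrix. -/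
/-- one generalized Gauss–Seidel iteration maps the residual by
`(B x₁' + B̃ x₂' − b) = (I − B L⁻¹)(I − (1/m) B̃ s(B̃) N(B̃)⁻¹)(B x₁ + B̃ x₂ − b)`. -/
theorem generalized_gauss_seidel_residual_formula
    (m p : ℕ) (hm : 0 < m) (hp : 0 < p)
    (B : Matrix (Fin m) (Fin m) ℝ) (Bt : Matrix (Fin m) (Fin p) ℝ) (b : Fin m → ℝ)
    (hDiag : ∀ i, B i i ≠ 0) (hRows : ∀ i, Bt i ≠ 0)
    (s : Matrix (Fin p) (Fin m) ℝ) (hs : ∀ j i, s j i = Real.sign (Bt i j))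
    (N : Matrix (Fin m) (Fin m) ℝ)
    (hN : N = Matrix.diagonal (fun i => ∑ j, |Bt i j|))
    (L : Matrix (Fin m) (Fin m) ℝ) (hL : ∀ i j, L i j = if (j : ℕ) ≤ (i : ℕ) then B i j else 0)
    (R : Matrix (Fin m) (Fin m) ℝ) (hR : R = B - L)
    (x₁ : Fin m → ℝ) (x₂ : Fin p → ℝ)
    (d : Fin m → ℝ)
    (hd : ∀ i, d i = (b i - (B.mulVec x₁) i - (Bt.mulVec x₂) i) /
      ((m : ℝ) * ∑ j, |Bt i j|))
    (x₂' : Fin p → ℝ) (hx₂' : x₂' = x₂ + s.mulVec d)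
    (bhat : Fin m → ℝ) (hbhat : bhat = b - Bt.mulVec x₂')
    (x₁' : Fin m → ℝ) (hx₁' : x₁' = L⁻¹.mulVec (-(R.mulVec x₁) + bhat)) :
    B.mulVec x₁' + Bt.mulVec x₂' - b =
      ((1 - B * L⁻¹) * (1 - (1 / (m : ℝ)) • (Bt * s * N⁻¹))).mulVec
        (B.mulVec x₁ + Bt.mulVec x₂ - b) := by
  set r := B.mulVec x₁ + Bt.mulVec x₂ - b with hr
  -- the row sums are nonzero
  have hNi : ∀ i, (∑ j, |Bt i j|) ≠ 0 := by
    intro i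
    have h0 : ∃ j, Bt i j ≠ 0 := by
      by_contra h
      push_neg at h
      exact hRows i (funext h)
    obtain ⟨j, hj⟩ := h0
    have : 0 < ∑ j, |Bt i j| :=
      Finset.sum_pos' (fun j _ => abs_nonneg _) ⟨j, Finset.mem_univ j, abs_pos.mpr hj⟩
    exact ne_of_gt this
  have hNinv : N⁻¹ = Matrix.diagonal (fun i => (∑ j, |Bt i j|)⁻¹) := by
    rw [hN]
    apply Matrix.inv_eq_right_inv
    rw [Matrix.diagonal_mul_diagonal]
    convert Matrix.diagonal_one with i
    exact mul_inv_cancel₀ (hNi i)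
  -- L is invertible
  have hLdet : IsUnit L.det := by
    have hbt : L.BlockTriangular OrderDual.toDual := by
      intro i j hij
      rw [hL]
      simp only [OrderDual.toDual_lt_toDual] at hij
      rw [if_neg (by omega)]
    rw [Matrix.det_of_lowerTriangular L hbt]
    refine (Finset.prod_ne_zero_iff.mpr fun i _ => ?_).isUnit
    rw [hL]
    simpa using hDiag i
  have hLinv : L⁻¹ * L = 1 := Matrix.nonsing_inv_mul L hLdet
  -- d in matrix form
  have hd2 : d = (-(1 / (m : ℝ))) • (N⁻¹.mulVec r) := by
    funext i
    have hmne : (m : ℝ) ≠ 0 := Nat.cast_ne_zero.mpr hm.ne'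
    rw [hd i, hNinv]
    simp only [Pi.smul_apply, Matrix.mulVec_diagonal, smul_eq_mul, hr, Pi.add_apply,
      Pi.sub_apply]
    field_simp
    ring
  -- the residual after the x₂ update
  have hBtd : Bt.mulVec (s.mulVec d) = -((1 / (m : ℝ)) • (Bt * s * N⁻¹).mulVec r) := by
    rw [hd2, Matrix.mulVec_smul, Matrix.mulVec_mulVec, Matrix.mulVec_smul,
      Matrix.mulVec_mulVec, neg_smul, ← Matrix.mul_assoc]
  set r' := r + Bt.mulVec (s.mulVec d) with hr'
  have hr'2 : r' = (1 - (1 / (m : ℝ)) • (Bt * s * N⁻¹)).mulVec r := by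
    rw [hr', hBtd, Matrix.sub_mulVec, Matrix.one_mulVec, Matrix.smul_mulVec,
      ← sub_eq_add_neg]
  -- the argument of L⁻¹
  have harg : -(R.mulVec x₁) + bhat = L.mulVec x₁ - r' := by
    rw [hbhat, hR, hx₂', Matrix.sub_mulVec, Matrix.mulVec_add, Matrix.mulVec_mulVec, hr', hr]
    simp only [Matrix.mulVec_mulVec]
    abel
  have hBx₁' : B.mulVec x₁' = B.mulVec x₁ - (B * L⁻¹).mulVec r' := by
    have hfix : L⁻¹.mulVec (L.mulVec x₁) = x₁ := by
      rw [Matrix.mulVec_mulVec, hLinv, Matrix.one_mulVec]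
    rw [hx₁', harg, Matrix.mulVec_sub, hfix, Matrix.mulVec_sub, Matrix.mulVec_mulVec]
  -- put it together
  have hlhs : B.mulVec x₁' + Bt.mulVec x₂' - b = (1 - B * L⁻¹).mulVec r' := by
    rw [hBx₁', hx₂', Matrix.mulVec_add, Matrix.sub_mulVec, Matrix.one_mulVec, hr', hr]
    simp only [Matrix.mulVec_add]
    abel
  rw [hlhs, hr'2, Matrix.mulVec_mulVec]
end

section
/- Assume that every diagonal entry of B is nonzero and that every row of B̃ is nonzero. Let D be the diagonal part of B and R = B − D. Given x₁ ∈ ℝ^m and x₂ ∈ ℝ^p, define one generalized Jacobi iteration by: d ∈ ℝ^m with d_i = (b_i − B_i·x₁ − B̃_i·x₂)/(m·‖B̃_i‖₁); x₂' = x₂ + s(B̃)·d; b̂ = b − B̃·x₂'; and x₁' = D⁻¹·(−R·x₁ + b̂). Then ‖x₁' − x₁‖₁ + ‖x₂' − x₂‖₁ ≤ ( ‖D⁻¹·(I − (1/m)·B̃·s(B̃)·N(B̃)⁻¹)‖₁ + (1/m)·‖s(B̃)·N(B̃)⁻¹‖₁ ) · ‖B·x₁ + B̃·x₂ − b‖₁,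 where ‖·‖₁ on vectors is the ℓ1-norm and ‖·‖₁ on matrices is the ℓ1 operator norm. -/
/-- The ℓ1-norm of a vector: sum of absolute values of its entries. -/
noncomputable def vecL1 {n : ℕ} (v : Fin n → ℝ) : ℝ := ∑ i, |v i|

/-- The ℓ1 operator norm of a matrix: the maximum absolute column sum. -/
noncomputable def matL1 {a c : ℕ} (M : Matrix (Fin a) (Fin c) ℝ) : ℝ :=
  ⨆ j, ∑ i, |M i j|

lemma vecL1_neg {n : ℕ} (v : Fin n → ℝ) : vecL1 (-v) = vecL1 v := by
  simp [vecL1]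

lemma vecL1_smul {n : ℕ} (c : ℝ) (v : Fin n → ℝ) : vecL1 (c • v) = |c| * vecL1 v := by
  simp [vecL1, abs_mul, Finset.mul_sum]

lemma vecL1_nonneg {n : ℕ} (v : Fin n → ℝ) : 0 ≤ vecL1 v :=
  Finset.sum_nonneg fun _ _ => abs_nonneg _

lemma matL1_mulVec_le {a c : ℕ} (M : Matrix (Fin a) (Fin c) ℝ) (v : Fin c → ℝ) :
    vecL1 (M.mulVec v) ≤ matL1 M * vecL1 v := by
  have h1 : vecL1 (M.mulVec v) ≤ ∑ j, (∑ i, |M i j|) * |v j| := by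
    rw [vecL1]
    have key : ∀ i, |M.mulVec v i| ≤ ∑ j, |M i j| * |v j| := by
      intro i
      rw [Matrix.mulVec, dotProduct]
      exact (Finset.abs_sum_le_sum_abs _ _).trans (le_of_eq (by simp [abs_mul]))
    refine (Finset.sum_le_sum fun i _ => key i).trans (le_of_eq ?_)
    rw [Finset.sum_comm]
    simp [Finset.sum_mul]
  refine h1.trans ?_
  rw [vecL1, Finset.mul_sum]
  refine Finset.sum_le_sum fun j _ => ?_
  refine mul_le_mul_of_nonneg_right ?_ (abs_nonneg _)
  unfold matL1
  exact le_ciSup (f := fun j => ∑ i, |M i j|)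
    (Set.Finite.bddAbove (Set.finite_range fun j => ∑ i, |M i j|)) j

/-- the generalized Jacobi step satisfies
`‖x₁' − x₁‖₁ + ‖x₂' − x₂‖₁ ≤ (‖D⁻¹(I − (1/m) B̃ s N⁻¹)‖₁ + (1/m)‖s N⁻¹‖₁) ‖B x₁ + B̃ x₂ − b‖₁`. -/
theorem generalized_jacobi_step_bound
    (m p : ℕ) (hm : 0 < m) (hp : 0 < p)
    (B : Matrix (Fin m) (Fin m) ℝ) (Bt : Matrix (Fin m) (Fin p) ℝ) (b : Fin m → ℝ)
    (hDiag : ∀ i, B i i ≠ 0) (hRows : ∀ i, Bt i ≠ 0)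
    (s : Matrix (Fin p) (Fin m) ℝ) (hs : ∀ j i, s j i = Real.sign (Bt i j))
    (N : Matrix (Fin m) (Fin m) ℝ)
    (hN : N = Matrix.diagonal (fun i => ∑ j, |Bt i j|))
    (D : Matrix (Fin m) (Fin m) ℝ) (hD : D = Matrix.diagonal (fun i => B i i))
    (R : Matrix (Fin m) (Fin m) ℝ) (hR : R = B - D)
    (x₁ : Fin m → ℝ) (x₂ : Fin p → ℝ)
    (d : Fin m → ℝ)
    (hd : ∀ i, d i = (b i - (B.mulVec x₁) i - (Bt.mulVec x₂) i) /
      ((m : ℝ) * ∑ j, |Bt i j|))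
    (x₂' : Fin p → ℝ) (hx₂' : x₂' = x₂ + s.mulVec d)
    (bhat : Fin m → ℝ) (hbhat : bhat = b - Bt.mulVec x₂')
    (x₁' : Fin m → ℝ) (hx₁' : x₁' = D⁻¹.mulVec (-(R.mulVec x₁) + bhat)) :
    vecL1 (x₁' - x₁) + vecL1 (x₂' - x₂) ≤
      (matL1 (D⁻¹ * (1 - (1 / (m : ℝ)) • (Bt * s * N⁻¹))) +
        (1 / (m : ℝ)) * matL1 (s * N⁻¹)) *
      vecL1 (B.mulVec x₁ + Bt.mulVec x₂ - b) := by
  set r : Fin m → ℝ := B.mulVec x₁ + Bt.mulVec x₂ - b with hr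
  have hmR : (0:ℝ) < (m:ℝ) := by exact_mod_cast hm
  have hNi : ∀ i, (0:ℝ) < ∑ j, |Bt i j| := by
    intro i
    obtain ⟨j, hj⟩ : ∃ j, Bt i j ≠ 0 := by
      by_contra h
      push_neg at h
      exact hRows i (funext h)
    exact Finset.sum_pos' (fun _ _ => abs_nonneg _)
      ⟨j, Finset.mem_univ j, abs_pos.mpr hj⟩
  -- d = N⁻¹.mulVec ((-(1/m)) • r)
  have hNinv : N⁻¹ = Matrix.diagonal (fun i => (∑ j, |Bt i j|)⁻¹) := by
    apply Matrix.inv_eq_right_inv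
    rw [hN, Matrix.diagonal_mul_diagonal]
    have he : (fun i => (∑ j, |Bt i j|) * (∑ j, |Bt i j|)⁻¹) = fun _ => (1:ℝ) :=
      funext fun i => mul_inv_cancel₀ (hNi i).ne'
    rw [he, Matrix.diagonal_one]
  have hd2 : d = N⁻¹.mulVec ((-(1/(m:ℝ))) • r) := by
    funext i
    rw [hNinv, Matrix.mulVec_diagonal, hd i]
    have hri : r i = (B.mulVec x₁) i + (Bt.mulVec x₂) i - b i := rfl
    rw [Pi.smul_apply, hri, smul_eq_mul]
    have h1 : ((m:ℝ)) ≠ 0 := hmR.ne'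
    have h2 : (∑ j, |Bt i j|) ≠ 0 := (hNi i).ne'
    field_simp
    ring
  have hsd : s.mulVec d = (s * N⁻¹).mulVec ((-(1/(m:ℝ))) • r) := by
    rw [hd2, ← Matrix.mulVec_mulVec]
  -- x₂' - x₂
  have hx2diff : x₂' - x₂ = (s * N⁻¹).mulVec ((-(1/(m:ℝ))) • r) := by
    rw [hx₂', hsd]; abel
  -- D invertible
  have hDdet : IsUnit D.det := by
    rw [hD, Matrix.det_diagonal]
    exact (Finset.prod_ne_zero_iff.mpr fun i _ => hDiag i).isUnit
  have hDinvD : D⁻¹ * D = 1 := Matrix.nonsing_inv_mul D hDdet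
  -- x₁' - x₁
  have hBts : Bt.mulVec (s.mulVec d) = (Bt * s * N⁻¹).mulVec ((-(1/(m:ℝ))) • r) := by
    rw [hd2, Matrix.mulVec_mulVec, Matrix.mulVec_mulVec]
  have hx1diff : x₁' - x₁ =
      (D⁻¹ * (1 - (1 / (m : ℝ)) • (Bt * s * N⁻¹))).mulVec (-r) := by
    have hw : -(R.mulVec x₁) + bhat
        = D.mulVec x₁ + (1 - (1 / (m : ℝ)) • (Bt * s * N⁻¹)).mulVec (-r) := by
      rw [hbhat, hx₂', Matrix.mulVec_add, hBts, hR, Matrix.sub_mulVec,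
        Matrix.sub_mulVec (1 : Matrix (Fin m) (Fin m) ℝ), Matrix.one_mulVec,
        Matrix.smul_mulVec, Matrix.mulVec_smul, Matrix.mulVec_neg, hr]
      module
    rw [hx₁', hw, Matrix.mulVec_add, Matrix.mulVec_mulVec, hDinvD, Matrix.one_mulVec,
      ← Matrix.mulVec_mulVec]
    abel
  rw [hx1diff, hx2diff]
  have h1 := matL1_mulVec_le (D⁻¹ * (1 - (1 / (m : ℝ)) • (Bt * s * N⁻¹))) (-r)
  have h2 := matL1_mulVec_le (s * N⁻¹) ((-(1/(m:ℝ))) • r)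
  rw [vecL1_neg] at h1
  rw [vecL1_smul] at h2
  have habs : |(-(1/(m:ℝ)))| = 1/(m:ℝ) := by
    rw [abs_neg, abs_of_pos (by positivity)]
  rw [habs] at h2
  calc _ ≤ matL1 (D⁻¹ * (1 - (1 / (m : ℝ)) • (Bt * s * N⁻¹))) * vecL1 r
      + matL1 (s * N⁻¹) * (1/(m:ℝ) * vecL1 r) := add_le_add h1 h2
    _ = _ := by ring
end
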